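/- Let G be a finite simple graph with vertex set {1,…,n}, n ≥ 3. Then G has a Hamiltonian cycle if and only if there exists a point x ∈ ℂ^n satisfying, for every vertex i: ∏_{s=1}^n (x_i − s) = 0 and ∏_{j ∈ Adj(i)} (x_i − x_j + 1)·(x_i − x_j − (n−1)) = 0, where Adj(i) denotes the set of vertices adjacent to i in G. -/

import Mathlib

open SimpleGraph
open Fin.CommRing

private def fwdWalk {n : ℕ} [NeZero n] {G : SimpleGraph (Fin n)} (v : Fin n → Fin n)
    (h : ∀ k, G.Adj (v k) (v (k+1))) : ∀ (m : ℕ) (k : Fin n), G.Walk (v k) (v (k + (m : Fin n)))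
  | 0, k => Walk.nil.copy rfl (by simp)
  | m+1, k => (Walk.cons (h k) (fwdWalk v h m (k+1))).copy rfl (by push_cast; ring_nf)

private lemma fwdWalk_support {n : ℕ} [NeZero n] {G : SimpleGraph (Fin n)} (v : Fin n → Fin n)
    (h : ∀ k, G.Adj (v k) (v (k+1))) : ∀ (m : ℕ) (k : Fin n),
    (fwdWalk v h m k).support = (List.range (m+1)).map (fun i : ℕ => v (k + (i : Fin n)))
  | 0, k => by
    simp only [fwdWalk, Walk.support_copy, Walk.support_nil]
    rw [List.range_succ]
    simp
  | m+1, k => by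
    simp only [fwdWalk, Walk.support_copy, Walk.support_cons, fwdWalk_support v h m (k+1)]
    conv_rhs => rw [List.range_succ_eq_map]
    simp only [List.map_cons, List.map_map]
    congr 1
    · simp
    · apply List.map_congr_left
      intro i _
      simp only [Function.comp_apply]
      congr 1
      push_cast
      ring

private lemma fwdWalk_edges {n : ℕ} [NeZero n] {G : SimpleGraph (Fin n)} (v : Fin n → Fin n)
    (h : ∀ k, G.Adj (v k) (v (k+1))) : ∀ (m : ℕ) (k : Fin n),
    (fwdWalk v h m k).edges
      = (List.range m).map (fun i : ℕ => s(v (k + (i : Fin n)), v (k + (i : Fin n) + 1)))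
  | 0, k => by simp [fwdWalk]
  | m+1, k => by
    simp only [fwdWalk, Walk.edges_copy, Walk.edges_cons, fwdWalk_edges v h m (k+1)]
    conv_rhs => rw [List.range_succ_eq_map]
    simp only [List.map_cons, List.map_map]
    congr 1
    · simp
    · apply List.map_congr_left
      intro i _
      simp only [Function.comp_apply]
      congr 2 <;> push_cast <;> ring

private lemma ham_of_cyclic {n : ℕ} [NeZero n] (hn : 3 ≤ n) {G : SimpleGraph (Fin n)}
    (v : Fin n → Fin n) (hv : Function.Bijective v)
    (h : ∀ k, G.Adj (v k) (v (k+1))) :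
    ∃ (a : Fin n) (w : G.Walk a a), w.IsHamiltonianCycle := by
  have h1n : 1 % n = 1 := Nat.mod_eq_of_lt (by omega)
  have hvadd : ∀ i : ℕ, i < n → ((1 : Fin n) + (i : Fin n)).val = (1 + i) % n := by
    intro i hi
    rw [Fin.val_add, Fin.val_one', Fin.val_cast_of_lt hi, h1n]
  -- the path from v 1 to v 0
  have hend : (1 : Fin n) + ((n-1 : ℕ) : Fin n) = 0 := by
    rw [Nat.cast_sub (by omega : 1 ≤ n)]
    simp
  let p : G.Walk (v 1) (v 0) := (fwdWalk v h (n-1) 1).copy rfl (congrArg v hend)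
  have hps : p.support = (List.range n).map (fun i : ℕ => v (1 + (i : Fin n))) := by
    show (Walk.copy _ _ _).support = _
    rw [Walk.support_copy, fwdWalk_support, Nat.sub_add_cancel (by omega : 1 ≤ n)]
  have hpe : p.edges
      = (List.range (n-1)).map (fun i : ℕ => s(v (1 + (i : Fin n)), v (1 + (i : Fin n) + 1))) := by
    show (Walk.copy _ _ _).edges = _
    rw [Walk.edges_copy, fwdWalk_edges]
  have hnd : p.support.Nodup := by
    rw [hps]
    refine List.Nodup.map_on ?_ (List.nodup_range (n := n))
    intro i hi j hj hij
    simp only [List.mem_range] at hi hj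
    have := hv.injective hij
    have h2 : ((i : Fin n)) = (j : Fin n) := by
      have := add_left_cancel this
      exact this
    have := congrArg Fin.val h2
    rw [Fin.val_cast_of_lt hi, Fin.val_cast_of_lt hj] at this
    exact this
  have hpath : p.IsPath := Walk.IsPath.mk' hnd
  have hnotmem : s(v 0, v 1) ∉ p.edges := by
    rw [hpe]
    intro hmem
    obtain ⟨i, hi, heq⟩ := List.mem_map.mp hmem
    simp only [List.mem_range] at hi
    rw [Sym2.eq_iff] at heq
    have hval1 : ((1 : Fin n) + (i : Fin n)).val = 1 + i := by
      rw [hvadd i (by omega), Nat.mod_eq_of_lt (by omega)]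
    rcases heq with ⟨h1, h2⟩ | ⟨h1, h2⟩
    · have := congrArg Fin.val (hv.injective h1)
      rw [hval1] at this
      simp at this
    · have e1 : (1 : Fin n) + (i : Fin n) = 1 := hv.injective h1
      have : i = 0 := by
        have := congrArg Fin.val e1
        rw [hval1, Fin.val_one', h1n] at this
        omega
      subst this
      have e2 := hv.injective h2
      have := congrArg Fin.val e2
      rw [Fin.val_add, hvadd 0 (by omega), Fin.val_one', h1n] at this
      simp only [Fin.val_zero] at this
      rw [Nat.mod_eq_of_lt (by omega)] at this
      omega
  have h01 : G.Adj (v 0) (v 1) := by simpa using h 0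
  refine ⟨v 0, Walk.cons h01 p, ?_⟩
  rw [Walk.isHamiltonianCycle_iff_isCycle_and_support_count_tail_eq_one]
  constructor
  · exact (Walk.cons_isCycle_iff p h01).mpr ⟨hpath, hnotmem⟩
  · intro a
    have htail : (Walk.cons h01 p).support.tail = p.support := by
      rw [Walk.support_cons]
      rfl
    rw [htail, hps]
    apply List.count_eq_one_of_mem
    · exact (hps ▸ hnd)
    · obtain ⟨k, rfl⟩ := hv.surjective a
      refine List.mem_map.mpr ⟨(k - 1).val, ?_, ?_⟩
      · simp [List.mem_range]
      · congr 1
        rw [Fin.cast_val_eq_self]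
        ring

private lemma support_getElem_eq_getVert {V : Type*} {G : SimpleGraph V} {u v : V}
    (p : G.Walk u v) : ∀ (i : ℕ) (h : i < p.support.length), p.support[i] = p.getVert i := by
  induction p with
  | nil =>
    intro i h
    simp only [Walk.support_nil, List.length_singleton] at h
    have hi0 : i = 0 := by omega
    subst hi0
    rfl
  | cons ha q ih =>
    intro i h
    cases i with
    | zero => rfl
    | succ i =>
      simp only [Walk.support_cons, List.getElem_cons_succ, Walk.getVert_cons_succ]
      exact ih i (by simpa using h)

private lemma cyclic_of_ham {n : ℕ} [NeZero n] (hn : 3 ≤ n) {G : SimpleGraph (Fin n)}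
    (a : Fin n) (w : G.Walk a a) (hw : w.IsHamiltonianCycle) :
    ∃ v : Fin n → Fin n, Function.Bijective v ∧ ∀ k : Fin n, G.Adj (v k) (v (k+1)) := by
  have h1n : 1 % n = 1 := Nat.mod_eq_of_lt (by omega)
  have hlen : w.length = n := by rw [hw.length_eq, Fintype.card_fin]
  have hslen : w.support.length = n + 1 := by rw [Walk.length_support, hlen]
  have hllen : w.support.tail.length = n := by simp [List.length_tail, hslen]
  have hnd : w.support.tail.Nodup := hw.isCycle.support_nodup
  have key : ∀ (i : ℕ) (hi : i < n),
      w.support.tail.get ⟨i, by omega⟩ = w.getVert (i+1) := by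
    intro i hi
    rw [List.get_eq_getElem, List.getElem_tail]
    exact support_getElem_eq_getVert w (i+1) (by omega)
  set v : Fin n → Fin n := fun k => w.getVert (k.val + 1) with hv
  have hinj : Function.Injective v := by
    intro k k' hkk
    have h3 := List.nodup_iff_injective_get.mp hnd
      (show w.support.tail.get ⟨k.val, by omega⟩ = w.support.tail.get ⟨k'.val, by omega⟩ by
        rw [key k.val k.isLt, key k'.val k'.isLt]; exact hkk)
    have h4 := congrArg Fin.val h3
    exact Fin.ext h4
  refine ⟨v, (Finite.injective_iff_bijective).mp hinj, ?_⟩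
  intro k
  by_cases hk : k.val + 1 < n
  · have h4 : (k + 1).val = k.val + 1 := by
      rw [Fin.val_add, Fin.val_one', h1n, Nat.mod_eq_of_lt (by omega)]
    have h5 := w.adj_getVert_succ (i := k.val + 1) (by omega)
    show G.Adj (w.getVert (k.val + 1)) (w.getVert ((k+1).val + 1))
    rw [h4]
    exact h5
  · have hk1 : k.val = n - 1 := by omega
    have h4 : (k + 1).val = 0 := by
      rw [Fin.val_add, Fin.val_one', h1n, hk1, show (n-1)+1 = n by omega, Nat.mod_self]
    have h5 := w.adj_getVert_succ (i := 0) (by omega)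
    rw [w.getVert_zero] at h5
    show G.Adj (w.getVert (k.val + 1)) (w.getVert ((k+1).val + 1))
    have h6 := w.getVert_length
    rw [hlen] at h6
    rw [h4, hk1, show (n-1)+1 = n by omega, h6]
    exact h5

theorem hamiltonianCycle_iff_polynomial_system (n : ℕ) (hn : 3 ≤ n)
    (G : SimpleGraph (Fin n)) [DecidableRel G.Adj] :
    (∃ (v : Fin n) (w : G.Walk v v), w.IsHamiltonianCycle) ↔
      ∃ x : Fin n → ℂ,
        ∀ i : Fin n,
          (∏ s ∈ Finset.Icc 1 n, (x i - (s : ℂ)) = 0) ∧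
          (∏ j ∈ G.neighborFinset i,
            ((x i - x j + 1) * (x i - x j - ((n : ℂ) - 1))) = 0) := by
  haveI : NeZero n := ⟨by omega⟩
  have h1n' : 1 % n = 1 := Nat.mod_eq_of_lt (by omega)
  constructor
  · rintro ⟨a, w, hw⟩
    obtain ⟨v, hv, hadj⟩ := cyclic_of_ham hn a w hw
    let e := Equiv.ofBijective v hv
    set x : Fin n → ℂ := fun i => ((e.symm i : Fin n) : ℕ) + 1 with hxdef
    have hx : ∀ m : Fin n, x (v m) = ((m : ℕ) : ℂ) + 1 := by
      intro m
      have : e.symm (v m) = m := e.symm_apply_apply m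
      rw [hxdef]
      simp only [this]
    refine ⟨x, fun i => ⟨?_, ?_⟩⟩
    · apply Finset.prod_eq_zero (i := ((e.symm i : Fin n) : ℕ) + 1)
      · exact Finset.mem_Icc.mpr ⟨by omega, by have := (e.symm i).isLt; omega⟩
      · rw [hxdef]
        push_cast
        ring
    · set k := e.symm i with hk
      have hik : i = v k := (e.apply_symm_apply i).symm
      apply Finset.prod_eq_zero (i := v (k+1))
      · rw [SimpleGraph.mem_neighborFinset, hik]
        exact hadj k
      · have hxi : x i = ((k : ℕ) : ℂ) + 1 := by rw [hik, hx]
        rw [hxi, hx (k+1)]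
        by_cases hlt : (k : ℕ) + 1 < n
        · have h4 : ((k + 1 : Fin n) : ℕ) = (k : ℕ) + 1 := by
            rw [Fin.val_add, Fin.val_one', h1n', Nat.mod_eq_of_lt (by omega)]
          rw [h4]
          apply mul_eq_zero.mpr
          left
          push_cast
          ring
        · have hk1 : (k : ℕ) = n - 1 := by have := k.isLt; omega
          have h4 : ((k + 1 : Fin n) : ℕ) = 0 := by
            rw [Fin.val_add, Fin.val_one', h1n', hk1,
              show (n-1)+1 = n by omega, Nat.mod_self]
          rw [h4, hk1]
          apply mul_eq_zero.mpr
          right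
          rw [Nat.cast_sub (show 1 ≤ n by omega)]
          push_cast
          ring
  · rintro ⟨x, hx⟩
    have h1n : 1 % n = 1 := Nat.mod_eq_of_lt (by omega)
    have hy : ∀ i, ∃ y : Fin n, x i = ((y : ℕ) : ℂ) + 1 := by
      intro i
      obtain ⟨s, hs, hzero⟩ := Finset.prod_eq_zero_iff.mp (hx i).1
      rw [Finset.mem_Icc] at hs
      refine ⟨⟨s - 1, by omega⟩, ?_⟩
      have hxs : x i = (s : ℂ) := sub_eq_zero.mp hzero
      rw [hxs]
      show (s : ℂ) = ((s - 1 : ℕ) : ℂ) + 1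
      rw [Nat.cast_sub (hs.1)]
      push_cast
      ring
    choose y hy using hy
    have hstep : ∀ i, ∃ j, G.Adj i j ∧ y j = y i + 1 := by
      intro i
      obtain ⟨j, hj, hzero⟩ := Finset.prod_eq_zero_iff.mp (hx i).2
      rw [SimpleGraph.mem_neighborFinset] at hj
      refine ⟨j, hj, ?_⟩
      rcases mul_eq_zero.mp hzero with h0 | h0
      · rw [hy i, hy j] at h0
        have hnat : ((y j : ℕ) : ℂ) = (((y i : ℕ) + 1 : ℕ) : ℂ) := by
          push_cast
          linear_combination -h0
        have hnat2 : (y j : ℕ) = (y i : ℕ) + 1 := Nat.cast_injective hnat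
        have hlt : (y i : ℕ) + 1 < n := by have := (y j).isLt; omega
        apply Fin.ext
        rw [hnat2, Fin.val_add, Fin.val_one', h1n, Nat.mod_eq_of_lt (by omega)]
      · rw [hy i, hy j] at h0
        have hnat : ((y i : ℕ) : ℂ) = (((y j : ℕ) + (n - 1) : ℕ) : ℂ) := by
          push_cast [Nat.cast_sub (show 1 ≤ n by omega)]
          linear_combination h0
        have hnat2 : (y i : ℕ) = (y j : ℕ) + (n - 1) := Nat.cast_injective hnat
        have h5 : (y j : ℕ) = 0 ∧ (y i : ℕ) = n - 1 := by have := (y i).isLt; omega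
        apply Fin.ext
        rw [h5.1, Fin.val_add, Fin.val_one', h1n, h5.2,
          show (n-1)+1 = n by omega, Nat.mod_self]
    choose f hf1 hf2 using hstep
    have hmem : ∀ m : ℕ, y 0 + (m : Fin n) ∈ Finset.image y Finset.univ := by
      intro m
      induction m with
      | zero => simp
      | succ m ih =>
        have hsucc : ((m + 1 : ℕ) : Fin n) = (m : Fin n) + 1 := by push_cast; ring
        rw [hsucc, ← add_assoc]
        obtain ⟨i, _, hi⟩ := Finset.mem_image.mp ih
        rw [← hi, ← hf2 i]
        exact Finset.mem_image.mpr ⟨f i, Finset.mem_univ _, rfl⟩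
    have hsurj : Function.Surjective y := by
      intro k
      have := hmem ((k - y 0).val)
      rw [Fin.cast_val_eq_self, show y 0 + (k - y 0) = k by ring] at this
      obtain ⟨i, _, hi⟩ := Finset.mem_image.mp this
      exact ⟨i, hi⟩
    have hybij : Function.Bijective y := Finite.surjective_iff_bijective.mp hsurj
    let e := Equiv.ofBijective y hybij
    have hadj : ∀ k : Fin n, G.Adj (e.symm k) (e.symm (k + 1)) := by
      intro k
      have h6 : y (e.symm k) = k := e.apply_symm_apply k
      have h7 : y (f (e.symm k)) = k + 1 := by rw [hf2, h6]
      have h8 : e.symm (k + 1) = f (e.symm k) := by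
        rw [← h7]
        exact e.symm_apply_apply _
      rw [h8]
      exact hf1 _
    exact ham_of_cyclic hn (fun k => e.symm k) e.symm.bijective hadj
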